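/- Let V be a finite set, c : V → ℝ with c(a) > 0 for all a ∈ V, and f a set function on finite subsets of V that is monotone non-decreasing and submodular. Let A*, S ⊆ V be finite sets and s ∈ V with s ∉ S. If for every a ∈ A* \ S one has (f(S ∪ {a}) − f(S))/c(a) ≤ (f(S ∪ {s}) − f(S))/c(s), then f(A*) − f(S) ≤ (Σ_{a∈A*} c(a)) · (f(S ∪ {s}) − f(S))/c(s). -/

import Mathlib

/-- greedy per-step inequality. If `s` maximizes the marginal gain per
unit cost over `A* \ S`, then `f(A*) − f(S) ≤ (∑_{a∈A*} c a) · (f(S ∪ {s}) − f(S))/c(s)`. -/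
theorem greedy_step_bound
    {V : Type*} [Fintype V] [DecidableEq V]
    (c : V → ℝ) (hc : ∀ a, 0 < c a)
    (f : Finset V → ℝ)
    (hmono : ∀ A B : Finset V, A ⊆ B → f A ≤ f B)
    (hsub : ∀ A B : Finset V, A ⊆ B → ∀ j ∉ B,
      f (insert j B) - f B ≤ f (insert j A) - f A)
    (Astar S : Finset V) (s : V) (hs : s ∉ S)
    (hgreedy : ∀ a ∈ Astar \ S,
      (f (insert a S) - f S) / c a ≤ (f (insert s S) - f S) / c s) :
    f Astar - f S ≤ (∑ a ∈ Astar, c a) * ((f (insert s S) - f S) / c s) := by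
  set r : ℝ := (f (insert s S) - f S) / c s with hr
  have hr0 : 0 ≤ r :=
    div_nonneg (by linarith [hmono S (insert s S) (Finset.subset_insert s S)]) (hc s).le
  have key : ∀ T : Finset V, f (S ∪ T) - f S ≤ ∑ a ∈ T \ S, (f (insert a S) - f S) := by
    intro T
    induction T using Finset.induction_on with
    | empty => simp
    | insert _ _ hjT ih =>
      rename_i j T
      by_cases hjS : j ∈ S
      · have h1 : S ∪ insert j T = S ∪ T := by
          ext x; simp only [Finset.mem_union, Finset.mem_insert]
          constructor
          · rintro (h | rfl | h) <;> tauto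
          · tauto
        have h2 : insert j T \ S = T \ S := by
          ext x; simp only [Finset.mem_sdiff, Finset.mem_insert]
          constructor
          · rintro ⟨rfl | h, hx⟩
            · exact absurd hjS hx
            · exact ⟨h, hx⟩
          · tauto
        rw [h1, h2]; exact ih
      · have h1 : S ∪ insert j T = insert j (S ∪ T) := by
          ext x; simp only [Finset.mem_union, Finset.mem_insert]; tauto
        have h2 : insert j T \ S = insert j (T \ S) := by
          ext x; simp only [Finset.mem_sdiff, Finset.mem_insert]
          constructor
          · rintro ⟨rfl | h, hx⟩
            · exact Or.inl rfl
            · exact Or.inr ⟨h, hx⟩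
          · rintro (rfl | ⟨h, hx⟩)
            · exact ⟨Or.inl rfl, hjS⟩
            · exact ⟨Or.inr h, hx⟩
        have hjST : j ∉ S ∪ T := by simp [hjS, hjT]
        have hsm := hsub S (S ∪ T) Finset.subset_union_left j hjST
        have hjTS : j ∉ T \ S := by simp [hjT]
        rw [h1, h2, Finset.sum_insert hjTS]
        linarith
  have step1 : f Astar - f S ≤ f (S ∪ Astar) - f S := by
    linarith [hmono Astar (S ∪ Astar) Finset.subset_union_right]
  have step2 : ∑ a ∈ Astar \ S, (f (insert a S) - f S) ≤ ∑ a ∈ Astar \ S, c a * r := by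
    apply Finset.sum_le_sum
    intro a ha
    have := hgreedy a ha
    have h := (div_le_iff₀ (hc a)).mp this
    linarith
  have step3 : ∑ a ∈ Astar \ S, c a * r ≤ ∑ a ∈ Astar, c a * r := by
    apply Finset.sum_le_sum_of_subset_of_nonneg Finset.sdiff_subset
    intro a _ _
    exact mul_nonneg (hc a).le hr0
  rw [Finset.sum_mul]
  linarith [key Astar]
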